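/- Let M be an odd prime, P and n positive integers, and b₀, w₀, …, w_n independent uniformly random elements of ℤ/Mℤ, with h_X, h_Y, h_Z defined as in the context. Then for every triple of index sequences (I,J,K) with I_t + J_t + K_t = P for all t and every fixed b ∈ ℤ/Mℤ, Pr[h_X(I) = h_Y(J) = h_Z(K) = b] = M⁻². -/

import Mathlib

open Finset

/-- The hash function for X-index sequences: `h_X(I) = b₀ + ∑ₜ wₜ·Iₜ` in `ℤ/Mℤ`. -/
def hashX {M P n : ℕ} (b₀ : ZMod M) (w : Fin n → ZMod M) (I : Fin n → Fin (P + 1)) : ZMod M :=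
  b₀ + ∑ t, w t * ((I t : ℕ) : ZMod M)

/-- The hash function for Y-index sequences: `h_Y(J) = b₀ + w₀ + ∑ₜ wₜ·Jₜ` in `ℤ/Mℤ`. -/
def hashY {M P n : ℕ} (b₀ w₀ : ZMod M) (w : Fin n → ZMod M) (J : Fin n → Fin (P + 1)) : ZMod M :=
  b₀ + w₀ + ∑ t, w t * ((J t : ℕ) : ZMod M)

/-- The hash function for Z-index sequences:
`h_Z(K) = b₀ + 2⁻¹·(w₀ + ∑ₜ wₜ·(P − Kₜ))` in `ℤ/Mℤ`. -/
def hashZ {M P n : ℕ} (b₀ w₀ : ZMod M) (w : Fin n → ZMod M) (K : Fin n → Fin (P + 1)) : ZMod M :=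
  b₀ + (2 : ZMod M)⁻¹ * (w₀ + ∑ t, w t * ((P : ZMod M) - ((K t : ℕ) : ZMod M)))

/-- For every triple `(I,J,K)` and fixed bucket `b ∈ ℤ/Mℤ`, over the uniform
independent choice of `b₀, w₀, w₁, …, w_n ∈ ℤ/Mℤ`,
`Pr[h_X(I) = h_Y(J) = h_Z(K) = b] = M⁻²`. -/
theorem stmt6 (M P n : ℕ) [NeZero M] (hM : M.Prime) (hModd : Odd M) (hP : 0 < P) (hn : 0 < n)
    (I J K : Fin n → Fin (P + 1))
    (hT : ∀ t, (I t : ℕ) + (J t : ℕ) + (K t : ℕ) = P)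
    (b : ZMod M) :
    ((univ.filter fun ω : ZMod M × ZMod M × (Fin n → ZMod M) =>
        hashX ω.1 ω.2.2 I = b ∧ hashY ω.1 ω.2.1 ω.2.2 J = b ∧
        hashZ ω.1 ω.2.1 ω.2.2 K = b).card : ℚ) /
      (Fintype.card (ZMod M × ZMod M × (Fin n → ZMod M)) : ℚ) = ((M : ℚ) ^ 2)⁻¹ := by
  classical
  haveI : Fact (M.Prime) := ⟨hM⟩
  have h2 : (2 : ZMod M) ≠ 0 := by
    intro h
    have : (M : ℕ) ∣ 2 := by
      have := (ZMod.natCast_eq_zero_iff 2 M).1 (by exact_mod_cast h)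
      exact this
    have hM2 : M = 2 := (Nat.prime_dvd_prime_iff_eq hM Nat.prime_two).1 this
    rw [hM2] at hModd
    exact (Nat.not_odd_iff_even.2 (by norm_num)) hModd
  set SI : (Fin n → ZMod M) → ZMod M := fun w => ∑ t, w t * ((I t : ℕ) : ZMod M) with hSI
  set SJ : (Fin n → ZMod M) → ZMod M := fun w => ∑ t, w t * ((J t : ℕ) : ZMod M) with hSJ
  have hsum : ∀ w : Fin n → ZMod M,
      ∑ t, w t * ((P : ZMod M) - ((K t : ℕ) : ZMod M)) = SI w + SJ w := by
    intro w
    rw [hSI, hSJ, ← Finset.sum_add_distrib]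
    refine Finset.sum_congr rfl fun t _ => ?_
    have : (P : ZMod M) - ((K t : ℕ) : ZMod M)
        = ((I t : ℕ) : ZMod M) + ((J t : ℕ) : ZMod M) := by
      have := hT t
      have : ((I t : ℕ) + (J t : ℕ) + (K t : ℕ) : ZMod M) = (P : ZMod M) := by
        exact_mod_cast congrArg (fun x : ℕ => (x : ZMod M)) this
      push_cast at this
      linear_combination -this
    rw [this, mul_add]
  have key : (univ.filter fun ω : ZMod M × ZMod M × (Fin n → ZMod M) =>
        hashX ω.1 ω.2.2 I = b ∧ hashY ω.1 ω.2.1 ω.2.2 J = b ∧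
        hashZ ω.1 ω.2.1 ω.2.2 K = b)
      = Finset.image (fun w : Fin n → ZMod M => (b - SI w, SI w - SJ w, w)) univ := by
    ext ⟨b₀, w₀, w⟩
    simp only [Finset.mem_filter, Finset.mem_image, Finset.mem_univ, true_and]
    simp only [hashX, hashY, hashZ, Prod.mk.injEq]
    constructor
    · rintro ⟨hx, hy, -⟩
      refine ⟨w, ?_, ?_, rfl⟩
      · rw [hSI]; linear_combination -hx
      · rw [hSI, hSJ]; linear_combination hx - hy
    · rintro ⟨w', h1, h2', rfl⟩
      subst h1; subst h2'
      refine ⟨by ring, by ring, ?_⟩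
      rw [hsum w']
      have : (2 : ZMod M)⁻¹ * (SI w' - SJ w' + (SI w' + SJ w')) = SI w' := by
        have h22 : (2 : ZMod M)⁻¹ * 2 = 1 := inv_mul_cancel₀ h2
        linear_combination (SI w') * h22
      rw [this]; ring
  rw [key, Finset.card_image_of_injective _ (fun a b hab => (Prod.ext_iff.1 (Prod.ext_iff.1 hab).2).2)]
  have hMQ : (M : ℚ) ≠ 0 := Nat.cast_ne_zero.2 hM.pos.ne'
  simp only [Finset.card_univ, Fintype.card_prod, Fintype.card_fun, ZMod.card, Fintype.card_fin]
  push_cast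
  rw [show (M : ℚ) * ((M : ℚ) * (M : ℚ) ^ n) = (M : ℚ) ^ n * (M : ℚ) ^ 2 by ring]
  rw [div_eq_iff (by positivity)]
  field_simp
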